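/- For fixed r ∈ ℤ/N and x chosen uniformly at random from (ℤ/N)^k, the probability that η_r^x ≥ (2^k − 1)/(2N) is at least 1 − 4N/(2^k − 1). -/

import Mathlib

open Finset

/-- The subset sum `b · x = ∑ j, b j * x j` over `ℤ/N`. -/
def dotP {N k : ℕ} (b : Fin k → Bool) (x : Fin k → ZMod N) : ZMod N :=
  ∑ j, if b j then x j else 0

/-- `η_r^x`: the number of bit strings `b ∈ {0,1}^k` with `b · x ≡ r (mod N)`. -/
def etaN {N k : ℕ} (r : ZMod N) (x : Fin k → ZMod N) : ℕ :=
  (Finset.univ.filter fun b : Fin k → Bool => dotP b x = r).card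

lemma dotP_zero {N k : ℕ} (b : Fin k → Bool) : dotP b (0 : Fin k → ZMod N) = 0 := by
  unfold dotP; simp

lemma dotP_add {N k : ℕ} (b : Fin k → Bool) (x y : Fin k → ZMod N) :
    dotP b (x + y) = dotP b x + dotP b y := by
  unfold dotP
  rw [← Finset.sum_add_distrib]
  refine Finset.sum_congr rfl fun j _ => ?_
  cases b j <;> simp

lemma dotP_update {N k : ℕ} (b : Fin k → Bool) (x : Fin k → ZMod N) (i : Fin k) (c : ZMod N) :
    dotP b (Function.update x i c) = dotP b x + (if b i then c - x i else 0) := by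
  unfold dotP
  have h : ∀ j ∈ Finset.univ, (if b j then Function.update x i c j else 0) =
      Function.update (fun j => if b j then x j else 0) i (if b i then c else 0) j := by
    intro j _
    rcases eq_or_ne j i with rfl | h
    · simp
    · simp [Function.update_of_ne h]
  rw [Finset.sum_congr rfl h, Finset.sum_update_of_mem (Finset.mem_univ i)]
  rw [show (Finset.univ : Finset (Fin k)) \ {i} = Finset.univ.erase i by
    rw [Finset.sdiff_singleton_eq_erase]]
  rw [← Finset.add_sum_erase Finset.univ _ (Finset.mem_univ i)]
  cases hbi : b i <;> simp <;> ring

lemma card_fiber_mul {α β : Type*} [Fintype α] [Fintype β] [DecidableEq β]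
    [AddCommGroup α] [AddCommGroup β]
    (Φ : α → β) (hadd : ∀ x y, Φ (x + y) = Φ x + Φ y) (hsurj : Function.Surjective Φ) (p : β) :
    (Finset.univ.filter fun x => Φ x = p).card * Fintype.card β = Fintype.card α := by
  classical
  have key : ∀ q : β, (Finset.univ.filter fun x => Φ x = q).card =
      (Finset.univ.filter fun x => Φ x = p).card := by
    intro q
    obtain ⟨d, hd⟩ := hsurj (p - q)
    apply Finset.card_bij' (fun x _ => x + d) (fun y _ => y - d)
    · intro x hx
      simp only [Finset.mem_filter, Finset.mem_univ, true_and] at hx ⊢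
      rw [hadd, hx, hd]; abel
    · intro y hy
      simp only [Finset.mem_filter, Finset.mem_univ, true_and] at hy ⊢
      have h2 : Φ (y - d) + Φ d = Φ y := by rw [← hadd, sub_add_cancel]
      rw [hd, hy] at h2
      have h3 := eq_sub_of_add_eq h2
      simpa using h3
    · intro x _; abel
    · intro y _; abel
  have h1 : Fintype.card α = ∑ q : β, (Finset.univ.filter fun x => Φ x = q).card := by
    rw [← Finset.card_univ]
    exact Finset.card_eq_sum_card_fiberwise (fun x _ => Finset.mem_univ (Φ x))
  rw [h1, Finset.sum_congr rfl fun q _ => key q, Finset.sum_const, Finset.card_univ,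
    smul_eq_mul, mul_comm]

lemma exists_true {k : ℕ} {b : Fin k → Bool} (hb : b ≠ fun _ => false) :
    ∃ i, b i = true := by
  by_contra h
  push_neg at h
  exact hb (funext fun i => by simpa using h i)

lemma single_surj {N k : ℕ} {b : Fin k → Bool} (hb : b ≠ fun _ => false) :
    Function.Surjective (fun x : Fin k → ZMod N => dotP b x) := by
  obtain ⟨i, hi⟩ := exists_true hb
  intro u
  refine ⟨Function.update 0 i u, ?_⟩
  simp [dotP_update, dotP_zero, hi]

lemma pair_surj_aux {N k : ℕ} (b b' : Fin k → Bool) (i : Fin k) (hbi : b i = true)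
    (hb'i : b' i = false) (j : Fin k) (hb'j : b' j = true) :
    Function.Surjective (fun x : Fin k → ZMod N => (dotP b x, dotP b' x)) := by
  rintro ⟨u, v⟩
  have hij : i ≠ j := by rintro rfl; rw [hb'i] at hb'j; exact absurd hb'j (by simp)
  refine ⟨Function.update (Function.update 0 j v) i (u - if b j then v else 0), ?_⟩
  have h0 : Function.update (0 : Fin k → ZMod N) j v i = 0 := Function.update_of_ne hij _ _
  simp only [dotP_update, dotP_zero, h0, hbi, hb'i, hb'j, Prod.mk.injEq]
  constructor
  · cases hbj : b j <;> simp [hbj] <;> ring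
  · simp

lemma pair_surj {N k : ℕ} {b b' : Fin k → Bool} (hb : b ≠ fun _ => false)
    (hb' : b' ≠ fun _ => false) (hne : b ≠ b') :
    Function.Surjective (fun x : Fin k → ZMod N => (dotP b x, dotP b' x)) := by
  have hi : ∃ i, b i ≠ b' i := by
    by_contra h; push_neg at h; exact hne (funext h)
  obtain ⟨i, hi⟩ := hi
  cases hbi : b i with
  | true =>
    have hb'i : b' i = false := by
      cases hb'i : b' i
      · rfl
      · rw [hbi, hb'i] at hi; exact absurd rfl hi
    obtain ⟨j, hj⟩ := exists_true hb'
    exact pair_surj_aux b b' i hbi hb'i j hj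
  | false =>
    have hb'i : b' i = true := by
      cases hb'i : b' i
      · rw [hbi, hb'i] at hi; exact absurd rfl hi
      · rfl
    obtain ⟨j, hj⟩ := exists_true hb
    have hs := pair_surj_aux b' b i hb'i hbi j hj (N := N)
    rintro ⟨u, v⟩
    obtain ⟨x, hx⟩ := hs (v, u)
    simp only [Prod.mk.injEq] at hx
    exact ⟨x, by simp [hx.1, hx.2]⟩

lemma card_single {N k : ℕ} [NeZero N] {b : Fin k → Bool} (hb : b ≠ fun _ => false) (s : ZMod N) :
    (Finset.univ.filter fun x : Fin k → ZMod N => dotP b x = s).card * N = N ^ k := by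
  have := card_fiber_mul (fun x : Fin k → ZMod N => dotP b x) (dotP_add b) (single_surj hb) s
  simpa [ZMod.card, Fintype.card_fun] using this

lemma card_pair {N k : ℕ} [NeZero N] {b b' : Fin k → Bool} (hb : b ≠ fun _ => false)
    (hb' : b' ≠ fun _ => false) (hne : b ≠ b') (s t : ZMod N) :
    (Finset.univ.filter fun x : Fin k → ZMod N => dotP b x = s ∧ dotP b' x = t).card * N ^ 2
      = N ^ k := by
  have := card_fiber_mul (fun x : Fin k → ZMod N => (dotP b x, dotP b' x))
    (fun x y => by simp [dotP_add, Prod.ext_iff]) (pair_surj hb hb' hne) (s, t)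
  simp only [Prod.mk.injEq] at this
  simpa [ZMod.card, Fintype.card_fun, Fintype.card_prod, sq] using this

/-- For fixed `r` and uniformly random `x ∈ (ℤ/N)^k`,
`Pr(η_r^x ≥ (2^k-1)/(2N)) ≥ 1 - 4N/(2^k-1)`. -/
theorem eta_large_prob {N k : ℕ} [NeZero N] (hk : 1 ≤ k) (r : ZMod N) :
    (1 : ℝ) - 4 * N / ((2 : ℝ) ^ k - 1) ≤
      ((Finset.univ.filter fun x : Fin k → ZMod N =>
          ((2 : ℝ) ^ k - 1) / (2 * N) ≤ (etaN r x : ℝ)).card : ℝ) / (N : ℝ) ^ k := by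
  classical
  have hN : 0 < N := Nat.pos_of_ne_zero (NeZero.ne N)
  set NR : ℝ := (N : ℝ) with hNR
  have hNR0 : (0 : ℝ) < NR := by rw [hNR]; exact_mod_cast hN
  set M : ℝ := NR ^ k with hM
  have hM0 : (0 : ℝ) < M := by positivity
  set B : Finset (Fin k → Bool) := Finset.univ.filter (fun b => b ≠ fun _ => false) with hB
  have hBcard : B.card = 2 ^ k - 1 := by
    rw [hB, Finset.filter_ne', Finset.card_erase_of_mem (Finset.mem_univ _)]
    simp [Fintype.card_fun]
  have h2k : 2 ≤ 2 ^ k := by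
    calc 2 = 2 ^ 1 := (pow_one 2).symm
    _ ≤ 2 ^ k := Nat.pow_le_pow_right (by norm_num) hk
  have hB1 : 1 ≤ B.card := by omega
  set Bc : ℝ := (B.card : ℝ) with hBc
  have hBc0 : (0 : ℝ) < Bc := by rw [hBc]; exact_mod_cast hB1
  have hBceq : Bc = (2 : ℝ) ^ k - 1 := by
    rw [hBc, hBcard]
    push_cast [Nat.one_le_two_pow]
    ring
  set f : (Fin k → ZMod N) → ℝ := fun x => ∑ b ∈ B, if dotP b x = r then (1 : ℝ) else 0
    with hf
  -- counting facts in ℝ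
  have hone : ∀ b ∈ B, ((Finset.univ.filter fun x : Fin k → ZMod N => dotP b x = r).card : ℝ)
      = M / NR := by
    intro b hb
    rw [hB, Finset.mem_filter] at hb
    have := card_single hb.2 r
    have : ((Finset.univ.filter fun x : Fin k → ZMod N => dotP b x = r).card : ℝ) * NR = M := by
      rw [hNR, hM, hNR]; exact_mod_cast congrArg (Nat.cast : ℕ → ℝ) this
    field_simp [← this]
    exact this
  have htwo : ∀ b ∈ B, ∀ b' ∈ B, b ≠ b' →
      ((Finset.univ.filter fun x : Fin k → ZMod N => dotP b x = r ∧ dotP b' x = r).card : ℝ)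
      = M / NR ^ 2 := by
    intro b hb b' hb' hne
    rw [hB, Finset.mem_filter] at hb hb'
    have := card_pair hb.2 hb'.2 hne r r
    have : ((Finset.univ.filter fun x : Fin k → ZMod N =>
        dotP b x = r ∧ dotP b' x = r).card : ℝ) * NR ^ 2 = M := by
      rw [hNR, hM, hNR]; exact_mod_cast congrArg (Nat.cast : ℕ → ℝ) this
    field_simp [← this]
    exact this
  -- first moment
  have h1 : ∑ x : Fin k → ZMod N, f x = Bc * (M / NR) := by
    rw [hf, Finset.sum_comm]
    rw [Finset.sum_congr rfl (fun b hb => by rw [Finset.sum_boole, hone b hb])]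
    rw [Finset.sum_const, nsmul_eq_mul]
  -- second moment
  have h2 : ∑ x : Fin k → ZMod N, (f x) ^ 2
      = Bc * (M / NR) + Bc * (Bc - 1) * (M / NR ^ 2) := by
    have expand : ∀ x, (f x) ^ 2 = ∑ b ∈ B, ∑ b' ∈ B,
        ((if dotP b x = r then (1 : ℝ) else 0) * (if dotP b' x = r then (1 : ℝ) else 0)) := by
      intro x
      rw [sq, hf, Finset.sum_mul_sum]
    rw [Finset.sum_congr rfl (fun x _ => expand x), Finset.sum_comm]
    have inner : ∀ b ∈ B, ∑ x : Fin k → ZMod N, ∑ b' ∈ B,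
        ((if dotP b x = r then (1 : ℝ) else 0) * (if dotP b' x = r then (1 : ℝ) else 0))
        = M / NR + (Bc - 1) * (M / NR ^ 2) := by
      intro b hb
      rw [Finset.sum_comm]
      have hterm : ∀ b' ∈ B, ∑ x : Fin k → ZMod N,
          ((if dotP b x = r then (1 : ℝ) else 0) * (if dotP b' x = r then (1 : ℝ) else 0))
          = ((Finset.univ.filter fun x : Fin k → ZMod N =>
              dotP b x = r ∧ dotP b' x = r).card : ℝ) := by
        intro b' _
        rw [Finset.sum_congr rfl (fun x _ => by
          show _ = if (dotP b x = r ∧ dotP b' x = r) then (1:ℝ) else 0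
          split_ifs with h1 h2 h3 <;> simp_all)]
        rw [Finset.sum_boole]
      rw [Finset.sum_congr rfl hterm]
      rw [← Finset.add_sum_erase B _ hb]
      have hbb : ((Finset.univ.filter fun x : Fin k → ZMod N =>
          dotP b x = r ∧ dotP b x = r).card : ℝ) = M / NR := by
        rw [← hone b hb]
        simp only [and_self]
      rw [hbb]
      congr 1
      rw [Finset.sum_congr rfl (fun b' hb' => htwo b hb b' (Finset.mem_of_mem_erase hb')
        (Ne.symm (Finset.ne_of_mem_erase hb')))]
      rw [Finset.sum_const, nsmul_eq_mul, Finset.card_erase_of_mem hb]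
      congr 1
      rw [hBc, Nat.cast_sub hB1, Nat.cast_one]
    rw [Finset.sum_congr rfl inner, Finset.sum_const, nsmul_eq_mul]
    ring
  -- variance bound
  set μ : ℝ := Bc / NR with hμ
  have hμ0 : 0 < μ := by rw [hμ]; positivity
  set S : ℝ := ∑ x : Fin k → ZMod N, (f x - μ) ^ 2 with hSdef
  have hcardΩ : ((Fintype.card (Fin k → ZMod N) : ℕ) : ℝ) = M := by
    rw [hM, hNR]
    simp [Fintype.card_fun, ZMod.card]
  have hS : S = (∑ x : Fin k → ZMod N, (f x) ^ 2)
      - 2 * μ * (∑ x : Fin k → ZMod N, f x) + M * μ ^ 2 := by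
    rw [hSdef]
    rw [Finset.sum_congr rfl (fun x _ => by ring_nf : ∀ x ∈ Finset.univ,
      (f x - μ) ^ 2 = (f x) ^ 2 - 2 * μ * f x + μ ^ 2)]
    rw [Finset.sum_add_distrib, Finset.sum_sub_distrib, ← Finset.mul_sum, Finset.sum_const,
      nsmul_eq_mul, Finset.card_univ, hcardΩ]
  have hSle : S ≤ Bc * M / NR := by
    have heq : S = Bc * M / NR - Bc * M / NR ^ 2 := by
      rw [hS, h1, h2, hμ]
      field_simp [hNR0.ne']
      ring
    have : 0 ≤ Bc * M / NR ^ 2 := by positivity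
    linarith [heq]
  -- Chebyshev
  set A : Finset (Fin k → ZMod N) := Finset.univ.filter (fun x => f x < μ / 2) with hA
  have hf0 : ∀ x, 0 ≤ f x := by
    intro x
    apply Finset.sum_nonneg
    intro b _
    split_ifs <;> norm_num
  have hAS : (A.card : ℝ) * (μ / 2) ^ 2 ≤ S := by
    have step1 : (A.card : ℝ) * (μ / 2) ^ 2 = ∑ _x ∈ A, (μ / 2) ^ 2 := by
      rw [Finset.sum_const, nsmul_eq_mul]
    rw [step1]
    have step2 : ∑ x ∈ A, (μ / 2) ^ 2 ≤ ∑ x ∈ A, (f x - μ) ^ 2 := by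
      apply Finset.sum_le_sum
      intro x hx
      rw [hA, Finset.mem_filter] at hx
      have hfx : f x < μ / 2 := hx.2
      have h1 : μ / 2 ≤ μ - f x := by linarith
      have h2 : (0:ℝ) ≤ μ / 2 := by linarith
      calc (μ / 2) ^ 2 ≤ (μ - f x) ^ 2 := pow_le_pow_left₀ h2 h1 2
      _ = (f x - μ) ^ 2 := by ring
    refine step2.trans ?_
    rw [hSdef]
    apply Finset.sum_le_sum_of_subset_of_nonneg (Finset.subset_univ A)
    intro x _ _
    positivity
  have hAcard : (A.card : ℝ) ≤ 4 * M * NR / Bc := by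
    have h := hAS.trans hSle
    rw [hμ] at h
    have hcoef : (Bc / NR / 2) ^ 2 = Bc ^ 2 / (4 * NR ^ 2) := by
      rw [div_div, div_pow]
      congr 1
      ring
    rw [hcoef, ← mul_div_assoc] at h
    rw [div_le_div_iff₀ (by positivity) hNR0] at h
    rw [le_div_iff₀ hBc0]
    have hpos : (0:ℝ) < Bc * NR := by positivity
    refine le_of_mul_le_mul_right ?_ hpos
    calc (A.card:ℝ) * Bc * (Bc * NR) = (A.card:ℝ) * Bc ^ 2 * NR := by ring
    _ ≤ Bc * M * (4 * NR ^ 2) := h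
    _ = 4 * M * NR * (Bc * NR) := by ring
  -- conclusion
  set T : Finset (Fin k → ZMod N) := Finset.univ.filter (fun x =>
    ((2 : ℝ) ^ k - 1) / (2 * (N:ℝ)) ≤ (etaN r x : ℝ)) with hT
  have hsub : Finset.univ \ A ⊆ T := by
    intro x hx
    rw [Finset.mem_sdiff, hA, Finset.mem_filter] at hx
    have hfx : μ / 2 ≤ f x := by
      by_contra hcon
      exact hx.2 ⟨Finset.mem_univ x, lt_of_not_ge hcon⟩
    have hfeta : f x ≤ (etaN r x : ℝ) := by
      have hfx2 : f x = ((B.filter fun b => dotP b x = r).card : ℝ) := by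
        simp only [hf]
        rw [Finset.sum_boole]
      rw [hfx2]
      unfold etaN
      have : (B.filter fun b => dotP b x = r) ⊆
          (Finset.univ.filter fun b : Fin k → Bool => dotP b x = r) := by
        apply Finset.filter_subset_filter
        exact Finset.subset_univ B
      exact_mod_cast Finset.card_le_card this
    rw [hT, Finset.mem_filter]
    refine ⟨Finset.mem_univ x, ?_⟩
    have : ((2 : ℝ) ^ k - 1) / (2 * (N:ℝ)) = μ / 2 := by
      rw [hμ, hBceq, hNR]
      ring
    rw [this]
    exact hfx.trans hfeta
  have hTcard : M - (A.card : ℝ) ≤ (T.card : ℝ) := by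
    have h1 : ((Finset.univ \ A).card : ℝ) ≤ (T.card : ℝ) := by
      exact_mod_cast Finset.card_le_card hsub
    have h2 : ((Finset.univ \ A).card : ℝ) = M - (A.card : ℝ) := by
      rw [Finset.card_sdiff_of_subset (Finset.subset_univ A), Finset.card_univ,
        Nat.cast_sub (Finset.card_le_univ A), hcardΩ]
    linarith
  -- final inequality
  show (1 : ℝ) - 4 * NR / ((2 : ℝ) ^ k - 1) ≤ (T.card : ℝ) / M
  rw [← hBceq, le_div_iff₀ hM0]
  have : (1 - 4 * NR / Bc) * M = M - 4 * M * NR / Bc := by ring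
  rw [this]
  linarith
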